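/- (Theorem 2, (i)⇔(iii)) There exists an observer candidate Σ̂ that is a UIO for the system Σ if and only if there exist matrices T₀, T₁ ∈ ℝ^{n×(n+p−r)} and a Schur stable matrix A_UIO ∈ ℝ^{n×n} such that the polynomial matrix identity (T₀ + z T₁) · [M_E M_F] · [zI_n − A; −C] = zI_n − A_UIO holds in ℝ[z]^{n×n}, where [zI_n − A; −C] ∈ ℝ[z]^{(n+p)×n} stacks zI_n − A over −C. -/

import Mathlib

open Matrix Filter

noncomputable section

/-- A real square matrix is Schur stable if all its complex eigenvalues
have modulus strictly less than 1. -/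
def SchurStable {n : ℕ} (M : Matrix (Fin n) (Fin n) ℝ) : Prop :=
  ∀ μ ∈ spectrum ℂ (M.map (algebraMap ℝ ℂ)), ‖μ‖ < 1

/-- `(x, u, y, d)` is a solution of the system `Σ`:
`x(t+1) = A x(t) + B u(t) + E d(t)`, `y(t) = C x(t) + D u(t) + F d(t)`. -/
def SigmaSol {n m p r : ℕ}
    (A : Matrix (Fin n) (Fin n) ℝ) (B : Matrix (Fin n) (Fin m) ℝ)
    (Cm : Matrix (Fin p) (Fin n) ℝ) (Dm : Matrix (Fin p) (Fin m) ℝ)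
    (E : Matrix (Fin n) (Fin r) ℝ) (F : Matrix (Fin p) (Fin r) ℝ)
    (x : ℕ → Fin n → ℝ) (u : ℕ → Fin m → ℝ) (y : ℕ → Fin p → ℝ)
    (d : ℕ → Fin r → ℝ) : Prop :=
  ∀ t : ℕ,
    x (t + 1) = A.mulVec (x t) + B.mulVec (u t) + E.mulVec (d t) ∧
    y t = Cm.mulVec (x t) + Dm.mulVec (u t) + F.mulVec (d t)

/-- `(x̂, u, y, z)` is a solution of the observer candidate `Σ̂`:
`z(t+1) = A_UIO z(t) + Bu u(t) + By y(t)`, `x̂(t) = z(t) + Du u(t) + Dy y(t)`. -/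
def ObsSol {n m p : ℕ}
    (Auio : Matrix (Fin n) (Fin n) ℝ) (Bu : Matrix (Fin n) (Fin m) ℝ)
    (By : Matrix (Fin n) (Fin p) ℝ) (Du : Matrix (Fin n) (Fin m) ℝ)
    (Dy : Matrix (Fin n) (Fin p) ℝ)
    (xh : ℕ → Fin n → ℝ) (u : ℕ → Fin m → ℝ) (y : ℕ → Fin p → ℝ)
    (z : ℕ → Fin n → ℝ) : Prop :=
  ∀ t : ℕ,
    z (t + 1) = Auio.mulVec (z t) + Bu.mulVec (u t) + By.mulVec (y t) ∧
    xh t = z t + Du.mulVec (u t) + Dy.mulVec (y t)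

/-- `Σ̂` is an acceptor for `Σ`: every solution of `Σ` can be tracked exactly. -/
def IsAcceptor {n m p r : ℕ}
    (A : Matrix (Fin n) (Fin n) ℝ) (B : Matrix (Fin n) (Fin m) ℝ)
    (Cm : Matrix (Fin p) (Fin n) ℝ) (Dm : Matrix (Fin p) (Fin m) ℝ)
    (E : Matrix (Fin n) (Fin r) ℝ) (F : Matrix (Fin p) (Fin r) ℝ)
    (Auio : Matrix (Fin n) (Fin n) ℝ) (Bu : Matrix (Fin n) (Fin m) ℝ)
    (By : Matrix (Fin n) (Fin p) ℝ) (Du : Matrix (Fin n) (Fin m) ℝ)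
    (Dy : Matrix (Fin n) (Fin p) ℝ) : Prop :=
  ∀ (x : ℕ → Fin n → ℝ) (u : ℕ → Fin m → ℝ) (y : ℕ → Fin p → ℝ)
    (d : ℕ → Fin r → ℝ), SigmaSol A B Cm Dm E F x u y d →
      ∃ z : ℕ → Fin n → ℝ, ObsSol Auio Bu By Du Dy x u y z

/-- `Σ̂` is an unknown-input observer (UIO) for `Σ`: it is an acceptor and
the estimation error tends to zero for all matching solutions. -/
def IsUIO {n m p r : ℕ}
    (A : Matrix (Fin n) (Fin n) ℝ) (B : Matrix (Fin n) (Fin m) ℝ)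
    (Cm : Matrix (Fin p) (Fin n) ℝ) (Dm : Matrix (Fin p) (Fin m) ℝ)
    (E : Matrix (Fin n) (Fin r) ℝ) (F : Matrix (Fin p) (Fin r) ℝ)
    (Auio : Matrix (Fin n) (Fin n) ℝ) (Bu : Matrix (Fin n) (Fin m) ℝ)
    (By : Matrix (Fin n) (Fin p) ℝ) (Du : Matrix (Fin n) (Fin m) ℝ)
    (Dy : Matrix (Fin n) (Fin p) ℝ) : Prop :=
  IsAcceptor A B Cm Dm E F Auio Bu By Du Dy ∧
  ∀ (x : ℕ → Fin n → ℝ) (u : ℕ → Fin m → ℝ) (y : ℕ → Fin p → ℝ)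
    (d : ℕ → Fin r → ℝ) (xh : ℕ → Fin n → ℝ) (z : ℕ → Fin n → ℝ),
      SigmaSol A B Cm Dm E F x u y d → ObsSol Auio Bu By Du Dy xh u y z →
      Tendsto (fun t => x t - xh t) atTop (nhds 0)

/-- Row index type of the data matrix `Φ_d = [X_p; X_f; U_p; U_f; Y_p; Y_f]`. -/
abbrev RowIdx (n m p : ℕ) := (Fin n ⊕ Fin n) ⊕ ((Fin m ⊕ Fin m) ⊕ (Fin p ⊕ Fin p))

/-- The data matrix `Φ_d = [X_p; X_f; U_p; U_f; Y_p; Y_f] ∈ ℝ^{2(n+m+p)×(T−1)}`. -/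
def PhiD {n m p : ℕ} (T : ℕ) (xd : ℕ → Fin n → ℝ) (ud : ℕ → Fin m → ℝ)
    (yd : ℕ → Fin p → ℝ) : Matrix (RowIdx n m p) (Fin (T - 1)) ℝ :=
  Matrix.of fun i j =>
    match i with
    | Sum.inl (Sum.inl a) => xd j.1 a
    | Sum.inl (Sum.inr a) => xd (j.1 + 1) a
    | Sum.inr (Sum.inl (Sum.inl a)) => ud j.1 a
    | Sum.inr (Sum.inl (Sum.inr a)) => ud (j.1 + 1) a
    | Sum.inr (Sum.inr (Sum.inl a)) => yd j.1 a
    | Sum.inr (Sum.inr (Sum.inr a)) => yd (j.1 + 1) a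

/-- The stacked vector `(x(t), x(t+1), u(t), u(t+1), y(t), y(t+1))`. -/
def stackVec {n m p : ℕ} (x : ℕ → Fin n → ℝ) (u : ℕ → Fin m → ℝ)
    (y : ℕ → Fin p → ℝ) (t : ℕ) : RowIdx n m p → ℝ :=
  fun i =>
    match i with
    | Sum.inl (Sum.inl a) => x t a
    | Sum.inl (Sum.inr a) => x (t + 1) a
    | Sum.inr (Sum.inl (Sum.inl a)) => u t a
    | Sum.inr (Sum.inl (Sum.inr a)) => u (t + 1) a
    | Sum.inr (Sum.inr (Sum.inl a)) => y t a
    | Sum.inr (Sum.inr (Sum.inr a)) => y (t + 1) a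

/-- The matrix `[X_p; U_p; U_f; D_p; D_f]` appearing in the Assumption. -/
def HistMat {n m r : ℕ} (T : ℕ) (xd : ℕ → Fin n → ℝ) (ud : ℕ → Fin m → ℝ)
    (dd : ℕ → Fin r → ℝ) :
    Matrix (Fin n ⊕ ((Fin m ⊕ Fin m) ⊕ (Fin r ⊕ Fin r))) (Fin (T - 1)) ℝ :=
  Matrix.of fun i j =>
    match i with
    | Sum.inl a => xd j.1 a
    | Sum.inr (Sum.inl (Sum.inl a)) => ud j.1 a
    | Sum.inr (Sum.inl (Sum.inr a)) => ud (j.1 + 1) a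
    | Sum.inr (Sum.inr (Sum.inl a)) => dd j.1 a
    | Sum.inr (Sum.inr (Sum.inr a)) => dd (j.1 + 1) a

namespace UIOAux

open Polynomial

lemma matrix_eq_of_mulVec {α β : Type*} [Fintype β] [DecidableEq β]
    {A B : Matrix α β ℝ} (h : ∀ v, A.mulVec v = B.mulVec v) : A = B := by
  ext i j
  have := congrFun (h (Pi.single j 1)) i
  simpa [Matrix.mulVec_single] using this

lemma exists_factor {q : ℕ} {ι : Type*} [Fintype ι] [DecidableEq ι] {r : ℕ}
    (M : Matrix (Fin q) ι ℝ) (W : Matrix ι (Fin r) ℝ)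
    (hq : M.rank = q) (hr : W.rank = r) (hcard : Fintype.card ι = q + r)
    (hMW : M * W = 0) {k : ℕ} (L : Matrix (Fin k) ι ℝ) (hL : L * W = 0) :
    ∃ G : Matrix (Fin k) (Fin q) ℝ, G * M = L := by
  have hsub : LinearMap.range (Mᵀ.mulVecLin) ≤ LinearMap.ker (Wᵀ.mulVecLin) := by
    rintro _ ⟨g, rfl⟩
    simp only [LinearMap.mem_ker, Matrix.mulVecLin_apply]
    rw [Matrix.mulVec_mulVec, ← Matrix.transpose_mul, hMW, Matrix.transpose_zero,
      Matrix.zero_mulVec]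
  have hrange : Module.finrank ℝ (LinearMap.range (Mᵀ.mulVecLin)) = q := by
    have h : Mᵀ.rank = q := by rw [Matrix.rank_transpose]; exact hq
    rwa [Matrix.rank] at h
  have hker : Module.finrank ℝ (LinearMap.ker (Wᵀ.mulVecLin)) = q := by
    have h1 := LinearMap.finrank_range_add_finrank_ker (Wᵀ.mulVecLin)
    have h2 : Module.finrank ℝ (LinearMap.range (Wᵀ.mulVecLin)) = r := by
      have h : Wᵀ.rank = r := by rw [Matrix.rank_transpose]; exact hr
      rwa [Matrix.rank] at h
    have h3 : Module.finrank ℝ (ι → ℝ) = q + r := by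
      simp [Module.finrank_pi, hcard]
    rw [h2, h3] at h1
    omega
  have heq : LinearMap.range (Mᵀ.mulVecLin) = LinearMap.ker (Wᵀ.mulVecLin) :=
    Submodule.eq_of_le_of_finrank_le hsub (by rw [hrange, hker])
  have hrow : ∀ i, ∃ g : Fin q → ℝ, Mᵀ.mulVec g = fun w => L i w := by
    intro i
    have : (fun w => L i w) ∈ LinearMap.ker (Wᵀ.mulVecLin) := by
      simp only [LinearMap.mem_ker, Matrix.mulVecLin_apply]
      funext c
      have : (L * W) i c = 0 := by rw [hL]; rfl
      simpa [Matrix.mulVec, Matrix.mul_apply, dotProduct, mul_comm] using this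
    rw [← heq] at this
    obtain ⟨g, hg⟩ := this
    exact ⟨g, hg⟩
  choose g hg using hrow
  refine ⟨Matrix.of (fun i k => g i k), ?_⟩
  ext i w
  have := congrFun (hg i) w
  simpa [Matrix.mul_apply, Matrix.mulVec, dotProduct, mul_comm] using this

lemma poly_expand {n q : ℕ} (U V : Matrix (Fin n) (Fin q) ℝ) (W Z : Matrix (Fin q) (Fin n) ℝ) :
    (U.map (C : ℝ →+* ℝ[X]) + (X : ℝ[X]) • V.map (C : ℝ →+* ℝ[X])) *
      ((X : ℝ[X]) • W.map (C : ℝ →+* ℝ[X]) - Z.map (C : ℝ →+* ℝ[X])) =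
    ((X : ℝ[X]) ^ 2) • (V * W).map (C : ℝ →+* ℝ[X]) +
      (X : ℝ[X]) • (U * W - V * Z).map (C : ℝ →+* ℝ[X]) -
      (U * Z).map (C : ℝ →+* ℝ[X]) := by
  rw [Matrix.map_sub _ (fun a b => map_sub C a b), Matrix.map_mul, Matrix.map_mul,
    Matrix.map_mul, Matrix.map_mul]
  rw [Matrix.add_mul, Matrix.mul_sub, Matrix.mul_sub, Matrix.smul_mul, Matrix.mul_smul,
    Matrix.mul_smul, Matrix.smul_mul, smul_smul, ← sq, smul_sub]
  abel

lemma coeff_eq {a b c a' b' c' : ℝ}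
    (h : (X : ℝ[X]) ^ 2 * C a + (X : ℝ[X]) * C b - C c =
      (X : ℝ[X]) ^ 2 * C a' + (X : ℝ[X]) * C b' - C c') : a = a' ∧ b = b' ∧ c = c' := by
  rw [mul_comm ((X : ℝ[X]) ^ 2) (C a), mul_comm ((X : ℝ[X]) ^ 2) (C a'),
    mul_comm (X : ℝ[X]) (C b), mul_comm (X : ℝ[X]) (C b')] at h
  refine ⟨?_, ?_, ?_⟩
  · have := congrArg (fun p => Polynomial.coeff p 2) h
    simpa [Polynomial.coeff_add, Polynomial.coeff_sub, Polynomial.coeff_C,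
      Polynomial.coeff_C_mul, Polynomial.coeff_X_pow] using this
  · have := congrArg (fun p => Polynomial.coeff p 1) h
    simpa [Polynomial.coeff_add, Polynomial.coeff_sub, Polynomial.coeff_C,
      Polynomial.coeff_C_mul, Polynomial.coeff_X_pow] using this
  · have := congrArg (fun p => Polynomial.coeff p 0) h
    simpa [Polynomial.coeff_add, Polynomial.coeff_sub, Polynomial.coeff_C,
      Polynomial.coeff_C_mul, Polynomial.coeff_X_pow] using this

lemma matrix_coeff_eq {n : ℕ} {P Q R P' Q' R' : Matrix (Fin n) (Fin n) ℝ}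
    (h : ((X : ℝ[X]) ^ 2) • P.map (C : ℝ →+* ℝ[X]) + (X : ℝ[X]) • Q.map (C : ℝ →+* ℝ[X]) -
        R.map (C : ℝ →+* ℝ[X]) =
      ((X : ℝ[X]) ^ 2) • P'.map (C : ℝ →+* ℝ[X]) + (X : ℝ[X]) • Q'.map (C : ℝ →+* ℝ[X]) -
        R'.map (C : ℝ →+* ℝ[X])) : P = P' ∧ Q = Q' ∧ R = R' := by
  have key : ∀ i j, P i j = P' i j ∧ Q i j = Q' i j ∧ R i j = R' i j := by
    intro i j
    have h2 : ((X : ℝ[X]) ^ 2) • P.map (C : ℝ →+* ℝ[X]) i j +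
        ((X : ℝ[X]) • Q.map (C : ℝ →+* ℝ[X])) i j - R.map (C : ℝ →+* ℝ[X]) i j =
        ((X : ℝ[X]) ^ 2) • P'.map (C : ℝ →+* ℝ[X]) i j +
        ((X : ℝ[X]) • Q'.map (C : ℝ →+* ℝ[X])) i j - R'.map (C : ℝ →+* ℝ[X]) i j := by
      have := Matrix.ext_iff.2 h i j
      simpa [Matrix.add_apply, Matrix.sub_apply, Matrix.smul_apply] using this
    simp only [Matrix.add_apply, Matrix.sub_apply, Matrix.smul_apply, Matrix.map_apply,
      smul_eq_mul] at h2
    exact coeff_eq h2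
  exact ⟨Matrix.ext fun i j => (key i j).1, Matrix.ext fun i j => (key i j).2.1,
    Matrix.ext fun i j => (key i j).2.2⟩

lemma fromColumns_map_C {q n p : ℕ} (ME : Matrix (Fin q) (Fin n) ℝ)
    (MF : Matrix (Fin q) (Fin p) ℝ) :
    (Matrix.fromCols ME MF).map (C : ℝ →+* ℝ[X]) =
      Matrix.fromCols (ME.map (C : ℝ →+* ℝ[X])) (MF.map (C : ℝ →+* ℝ[X])) := by
  ext i j
  cases j <;> rfl

/-- Normal form of the left-hand side of the polynomial identity. -/
lemma lhs_normal {n p q : ℕ} (T0 T1 : Matrix (Fin n) (Fin q) ℝ)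
    (ME : Matrix (Fin q) (Fin n) ℝ) (MF : Matrix (Fin q) (Fin p) ℝ)
    (A : Matrix (Fin n) (Fin n) ℝ) (Cm : Matrix (Fin p) (Fin n) ℝ) :
    (T0.map (C : ℝ →+* ℝ[X]) + (X : ℝ[X]) • T1.map (C : ℝ →+* ℝ[X])) *
      (Matrix.fromCols ME MF).map (C : ℝ →+* ℝ[X]) *
      Matrix.fromRows
        ((X : ℝ[X]) • (1 : Matrix (Fin n) (Fin n) ℝ[X]) - A.map (C : ℝ →+* ℝ[X]))
        (-(Cm.map (C : ℝ →+* ℝ[X]))) =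
    ((X : ℝ[X]) ^ 2) • (T1 * ME).map (C : ℝ →+* ℝ[X]) +
      (X : ℝ[X]) • (T0 * ME - T1 * (ME * A + MF * Cm)).map (C : ℝ →+* ℝ[X]) -
      (T0 * (ME * A + MF * Cm)).map (C : ℝ →+* ℝ[X]) := by
  rw [Matrix.mul_assoc, fromColumns_map_C, Matrix.fromCols_mul_fromRows]
  have h1 : ME.map (C : ℝ →+* ℝ[X]) *
        ((X : ℝ[X]) • (1 : Matrix (Fin n) (Fin n) ℝ[X]) - A.map (C : ℝ →+* ℝ[X])) +
        MF.map (C : ℝ →+* ℝ[X]) * -(Cm.map (C : ℝ →+* ℝ[X])) =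
      (X : ℝ[X]) • ME.map (C : ℝ →+* ℝ[X]) -
        (ME * A + MF * Cm).map (C : ℝ →+* ℝ[X]) := by
    rw [Matrix.mul_sub, Matrix.mul_smul, Matrix.mul_one, Matrix.mul_neg,
      Matrix.map_add _ (fun a b => map_add C a b), Matrix.map_mul, Matrix.map_mul]
    abel
  rw [h1, poly_expand]

/-- Normal form of the right-hand side of the polynomial identity. -/
lemma rhs_normal {n : ℕ} (Auio : Matrix (Fin n) (Fin n) ℝ) :
    (X : ℝ[X]) • (1 : Matrix (Fin n) (Fin n) ℝ[X]) - Auio.map (C : ℝ →+* ℝ[X]) =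
    ((X : ℝ[X]) ^ 2) • ((0 : Matrix (Fin n) (Fin n) ℝ).map (C : ℝ →+* ℝ[X])) +
      (X : ℝ[X]) • ((1 : Matrix (Fin n) (Fin n) ℝ).map (C : ℝ →+* ℝ[X])) -
      Auio.map (C : ℝ →+* ℝ[X]) := by
  have h0 : (0 : Matrix (Fin n) (Fin n) ℝ).map (C : ℝ →+* ℝ[X]) = 0 := by
    ext i j; simp
  have h1 : (1 : Matrix (Fin n) (Fin n) ℝ).map (C : ℝ →+* ℝ[X]) = 1 := by
    ext i j
    by_cases h : i = j <;> simp [Matrix.map_apply, Matrix.one_apply, h]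
  rw [h0, h1, smul_zero, zero_add]

lemma entries_tendsto {n : ℕ} {M : Matrix (Fin n) (Fin n) ℝ}
    (h : ∀ v : Fin n → ℝ, Tendsto (fun t => (M ^ t).mulVec v) atTop (nhds 0)) (i j : Fin n) :
    Tendsto (fun t => (M ^ t) i j) atTop (nhds 0) := by
  have := (tendsto_pi_nhds.1 (h (Pi.single j 1))) i
  simpa [Matrix.mulVec_single] using this

lemma schur_of_tendsto {n : ℕ} {M : Matrix (Fin n) (Fin n) ℝ}
    (h : ∀ v : Fin n → ℝ, Tendsto (fun t => (M ^ t).mulVec v) atTop (nhds 0)) :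
    SchurStable M := by
  intro μ hμ
  set M' := M.map (algebraMap ℝ ℂ) with hM'
  rw [spectrum.mem_iff] at hμ
  have hdet : (algebraMap ℂ (Matrix (Fin n) (Fin n) ℂ) μ - M').det = 0 := by
    by_contra hd
    exact hμ ((Matrix.isUnit_iff_isUnit_det _).2 (isUnit_iff_ne_zero.2 hd))
  obtain ⟨v, hv, hval⟩ := (Matrix.exists_mulVec_eq_zero_iff).2 hdet
  have hev : M'.mulVec v = μ • v := by
    have h1 : (algebraMap ℂ (Matrix (Fin n) (Fin n) ℂ) μ - M').mulVec v = 0 := hval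
    rw [Matrix.sub_mulVec, sub_eq_zero] at h1
    rw [← h1, Algebra.algebraMap_eq_smul_one, Matrix.smul_mulVec, Matrix.one_mulVec]
  have hpow : ∀ t : ℕ, (M' ^ t).mulVec v = μ ^ t • v := by
    intro t
    induction t with
    | zero => simp [Matrix.one_mulVec]
    | succ t ih =>
      rw [pow_succ', ← Matrix.mulVec_mulVec, ih, Matrix.mulVec_smul, hev, smul_smul,
        mul_comm, pow_succ']
  obtain ⟨i, hvi⟩ : ∃ i, v i ≠ 0 := Function.ne_iff.1 hv
  have hent : ∀ i j, Tendsto (fun t => (M' ^ t) i j) atTop (nhds 0) := by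
    intro i j
    have hmap : ∀ t : ℕ, (M' ^ t) i j = ((M ^ t) i j : ℂ) := by
      intro t
      have : M' ^ t = (M ^ t).map (algebraMap ℝ ℂ) := by
        rw [hM']
        exact (map_pow ((algebraMap ℝ ℂ).mapMatrix) M t).symm
      rw [this]; rfl
    simp only [hmap]
    have := (entries_tendsto h i j)
    have := (Complex.continuous_ofReal.tendsto 0).comp this
    simpa [Function.comp_def] using this
  have hcomp : Tendsto (fun t => (μ ^ t) * v i) atTop (nhds 0) := by
    have heq : ∀ t, (μ ^ t) * v i = ∑ j, (M' ^ t) i j * v j := by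
      intro t
      have := congrFun (hpow t) i
      simpa [Matrix.mulVec, dotProduct, Pi.smul_apply, smul_eq_mul] using this.symm
    simp only [heq]
    have : Tendsto (fun t => ∑ j, (M' ^ t) i j * v j) atTop
        (nhds (∑ j : Fin n, (0 : ℂ) * v j)) :=
      tendsto_finset_sum _ (fun j _ => (hent i j).mul_const (v j))
    simpa using this
  by_contra hge
  push_neg at hge
  have hnorm : Tendsto (fun t => ‖μ‖ ^ t * ‖v i‖) atTop (nhds 0) := by
    have := hcomp.norm
    simpa [norm_mul, norm_pow] using this
  have hlb : ∀ t : ℕ, ‖v i‖ ≤ ‖μ‖ ^ t * ‖v i‖ := by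
    intro t
    have : (1 : ℝ) ≤ ‖μ‖ ^ t := one_le_pow₀ hge
    nlinarith [norm_nonneg (v i)]
  have hle := ge_of_tendsto hnorm (Eventually.of_forall hlb)
  exact hvi (norm_le_zero_iff.1 hle)

noncomputable def clmAlgEquiv (n : ℕ) :
    ((Fin n → ℂ) →ₗ[ℂ] (Fin n → ℂ)) ≃ₐ[ℂ] ((Fin n → ℂ) →L[ℂ] (Fin n → ℂ)) :=
  AlgEquiv.ofLinearEquiv (LinearMap.toContinuousLinearMap)
    (by ext x; rfl) (fun f g => by ext x; rfl)

noncomputable def matAlgEquiv (n : ℕ) :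
    Matrix (Fin n) (Fin n) ℂ ≃ₐ[ℂ] ((Fin n → ℂ) →L[ℂ] (Fin n → ℂ)) :=
  (Matrix.toLinAlgEquiv' ).trans (clmAlgEquiv n)

lemma tendsto_pow_mulVec_of_schur {n : ℕ} {M : Matrix (Fin n) (Fin n) ℝ}
    (h : SchurStable M) (v : Fin n → ℝ) :
    Tendsto (fun t => (M ^ t).mulVec v) atTop (nhds 0) := by
  classical
  set M' := M.map (algebraMap ℝ ℂ) with hM'
  set T := matAlgEquiv n M' with hT
  have hspec : spectrum ℂ T = spectrum ℂ M' := AlgEquiv.spectrum_eq (matAlgEquiv n) M'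
  have hrad : spectralRadius ℂ T < 1 := by
    rcases Set.eq_empty_or_nonempty (spectrum ℂ T) with he | hne
    · rw [spectralRadius, he]
      simp
    · obtain ⟨k, hk, hkr⟩ := spectrum.exists_nnnorm_eq_spectralRadius_of_nonempty hne
      rw [← hkr]
      have : ‖k‖ < 1 := h k (hspec ▸ hk)
      exact_mod_cast this
  have hG := spectrum.pow_nnnorm_pow_one_div_tendsto_nhds_spectralRadius T
  obtain ⟨c, hc1, hc2⟩ := exists_between hrad
  have hcne : c ≠ ⊤ := (hc2.trans_le le_top).ne
  have hevent : ∀ᶠ k : ℕ in atTop, (‖T ^ k‖₊ : ENNReal) ^ (1 / (k:ℝ)) < c :=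
    hG.eventually_lt_const hc1
  have hbound : ∀ᶠ k : ℕ in atTop, ‖T ^ k‖ ≤ c.toReal ^ k := by
    filter_upwards [hevent, eventually_ge_atTop 1] with k hk hk1
    have hkne : (k : ℝ) ≠ 0 := by positivity
    have h1 : (‖T ^ k‖₊ : ENNReal) = ((‖T ^ k‖₊ : ENNReal) ^ (1 / (k:ℝ))) ^ (k:ℝ) := by
      rw [← ENNReal.rpow_mul, one_div, inv_mul_cancel₀ hkne, ENNReal.rpow_one]
    have h2 : (‖T ^ k‖₊ : ENNReal) ≤ c ^ k := by
      rw [h1]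
      calc ((‖T ^ k‖₊ : ENNReal) ^ (1 / (k:ℝ))) ^ (k:ℝ) ≤ c ^ (k:ℝ) :=
            ENNReal.rpow_le_rpow hk.le (by positivity)
        _ = c ^ k := by rw [ENNReal.rpow_natCast]
    have h3 := ENNReal.toReal_mono (by simp [ENNReal.pow_ne_top hcne]) h2
    rw [ENNReal.coe_toReal, coe_nnnorm] at h3
    rw [ENNReal.toReal_pow] at h3
    exact h3
  have hc2' : c.toReal < 1 := by
    rw [← ENNReal.toReal_one]
    exact (ENNReal.toReal_lt_toReal hcne (by simp)).2 hc2
  have hg0 : Tendsto (fun k : ℕ => c.toReal ^ k) atTop (nhds 0) :=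
    tendsto_pow_atTop_nhds_zero_of_lt_one ENNReal.toReal_nonneg hc2'
  have hTpow : Tendsto (fun k : ℕ => T ^ k) atTop (nhds 0) :=
    squeeze_zero_norm' hbound hg0
  have hent : ∀ i j : Fin n, Tendsto (fun t => (M ^ t) i j) atTop (nhds 0) := by
    intro i j
    have happ : ∀ t : ℕ, ((T ^ t) (Pi.single j 1)) i = ((M ^ t) i j : ℂ) := by
      intro t
      have h1 : T ^ t = matAlgEquiv n (M' ^ t) := by rw [map_pow]
      have h2 : M' ^ t = (M ^ t).map (algebraMap ℝ ℂ) :=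
        (map_pow ((algebraMap ℝ ℂ).mapMatrix) M t).symm
      rw [h1, h2]
      show (((M ^ t).map (algebraMap ℝ ℂ)).mulVec (Pi.single j 1)) i = _
      rw [Matrix.mulVec_single]
      simp [Matrix.map_apply]
    have hb : ∀ t : ℕ, ‖(M ^ t) i j‖ ≤ ‖T ^ t‖ := by
      intro t
      have h1 : ‖((M ^ t) i j : ℂ)‖ = ‖(M ^ t) i j‖ := Complex.norm_real _
      rw [← h1, ← happ t]
      calc ‖((T ^ t) (Pi.single j 1)) i‖ ≤ ‖(T ^ t) (Pi.single j 1)‖ :=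
            norm_le_pi_norm _ i
        _ ≤ ‖T ^ t‖ * ‖(Pi.single j 1 : Fin n → ℂ)‖ := (T ^ t).le_opNorm _
        _ = ‖T ^ t‖ := by rw [Pi.norm_single, norm_one, mul_one]
    exact squeeze_zero_norm hb (by simpa using hTpow.norm)
  rw [tendsto_pi_nhds]
  intro i
  have : Tendsto (fun t => ∑ j, (M ^ t) i j * v j) atTop
      (nhds (∑ j : Fin n, (0:ℝ) * v j)) :=
    tendsto_finset_sum _ (fun j _ => ((hent i j).mul_const (v j)))
  simpa [Matrix.mulVec, dotProduct] using this

end UIOAux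

theorem theorem2_i_iff_iii {n m p r : ℕ} (hn : 0 < n) (hm : 0 < m) (hp : 0 < p) (hr : 0 < r)
    (A : Matrix (Fin n) (Fin n) ℝ) (B : Matrix (Fin n) (Fin m) ℝ)
    (Cm : Matrix (Fin p) (Fin n) ℝ) (Dm : Matrix (Fin p) (Fin m) ℝ)
    (E : Matrix (Fin n) (Fin r) ℝ) (F : Matrix (Fin p) (Fin r) ℝ)
    (hEF : (Matrix.fromRows E F).rank = r)
    (ME : Matrix (Fin (n + p - r)) (Fin n) ℝ) (MF : Matrix (Fin (n + p - r)) (Fin p) ℝ)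
    (hMrank : (Matrix.fromCols ME MF).rank = n + p - r)
    (hMker : ∀ v : Fin n ⊕ Fin p → ℝ,
      (Matrix.fromCols ME MF).mulVec v = 0 ↔
        ∃ c : Fin r → ℝ, v = (Matrix.fromRows E F).mulVec c) :
    (∃ (Auio : Matrix (Fin n) (Fin n) ℝ) (Bu : Matrix (Fin n) (Fin m) ℝ)
      (By : Matrix (Fin n) (Fin p) ℝ) (Du : Matrix (Fin n) (Fin m) ℝ)
      (Dy : Matrix (Fin n) (Fin p) ℝ), IsUIO A B Cm Dm E F Auio Bu By Du Dy) ↔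
    (∃ (T0 T1 : Matrix (Fin n) (Fin (n + p - r)) ℝ)
      (Auio : Matrix (Fin n) (Fin n) ℝ), SchurStable Auio ∧
      (T0.map (Polynomial.C : ℝ →+* Polynomial ℝ) +
        (Polynomial.X : Polynomial ℝ) • T1.map (Polynomial.C : ℝ →+* Polynomial ℝ)) *
        (Matrix.fromCols ME MF).map (Polynomial.C : ℝ →+* Polynomial ℝ) *
        Matrix.fromRows
          ((Polynomial.X : Polynomial ℝ) • (1 : Matrix (Fin n) (Fin n) (Polynomial ℝ)) -
            A.map (Polynomial.C : ℝ →+* Polynomial ℝ))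
          (-(Cm.map (Polynomial.C : ℝ →+* Polynomial ℝ))) =
        (Polynomial.X : Polynomial ℝ) • (1 : Matrix (Fin n) (Fin n) (Polynomial ℝ)) -
          Auio.map (Polynomial.C : ℝ →+* Polynomial ℝ)) := by
  classical
  have hMW : Matrix.fromCols ME MF * Matrix.fromRows E F = 0 := by
    apply UIOAux.matrix_eq_of_mulVec
    intro v
    rw [← Matrix.mulVec_mulVec, Matrix.zero_mulVec]
    exact (hMker _).2 ⟨v, rfl⟩
  have hEF0 : ME * E + MF * F = 0 := by
    rwa [Matrix.fromCols_mul_fromRows] at hMW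
  have hrle : r ≤ n + p := by
    have h1 := Matrix.rank_le_card_height (Matrix.fromRows E F)
    rw [hEF] at h1
    simpa [Fintype.card_sum] using h1
  have hcard : Fintype.card (Fin n ⊕ Fin p) = (n + p - r) + r := by
    rw [Fintype.card_sum, Fintype.card_fin, Fintype.card_fin]
    omega
  constructor
  · rintro ⟨Auio, Bu, By, Du, Dy, hacc, htend⟩
    have star : ∀ (ξ : Fin n → ℝ) (u0 u1 : Fin m → ℝ) (d0 d1 : Fin r → ℝ),
        (A.mulVec ξ + B.mulVec u0 + E.mulVec d0) - Du.mulVec u1 -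
          Dy.mulVec (Cm.mulVec (A.mulVec ξ + B.mulVec u0 + E.mulVec d0) +
            Dm.mulVec u1 + F.mulVec d1) =
        Auio.mulVec (ξ - Du.mulVec u0 -
            Dy.mulVec (Cm.mulVec ξ + Dm.mulVec u0 + F.mulVec d0)) +
          Bu.mulVec u0 + By.mulVec (Cm.mulVec ξ + Dm.mulVec u0 + F.mulVec d0) := by
      intro ξ u0 u1 d0 d1
      set u : ℕ → Fin m → ℝ := fun t => if t = 0 then u0 else u1 with hu
      set d : ℕ → Fin r → ℝ := fun t => if t = 0 then d0 else d1 with hd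
      set x : ℕ → Fin n → ℝ := fun t =>
        Nat.rec ξ (fun s xs => A.mulVec xs + B.mulVec (u s) + E.mulVec (d s)) t with hx
      set y : ℕ → Fin p → ℝ := fun t =>
        Cm.mulVec (x t) + Dm.mulVec (u t) + F.mulVec (d t) with hy
      have hsol : SigmaSol A B Cm Dm E F x u y d := fun t => ⟨rfl, rfl⟩
      obtain ⟨z, hz⟩ := hacc x u y d hsol
      have hz0 : z 0 = x 0 - Du.mulVec (u 0) - Dy.mulVec (y 0) := by
        rw [(hz 0).2]; abel
      have hz1 : z 1 = x 1 - Du.mulVec (u 1) - Dy.mulVec (y 1) := by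
        rw [(hz 1).2]; abel
      have key := (hz 0).1
      rw [hz0, hz1] at key
      exact key
    have E1 : A - Dy * (Cm * A) = Auio - Auio * (Dy * Cm) + By * Cm := by
      apply UIOAux.matrix_eq_of_mulVec
      intro v
      have h := star v 0 0 0 0
      simp only [Matrix.mulVec_zero, add_zero, zero_add, sub_zero] at h
      rw [Matrix.mulVec_sub] at h
      simp only [Matrix.sub_mulVec, Matrix.add_mulVec, ← Matrix.mulVec_mulVec]
      exact h
    have E3 : Dy * F = 0 := by
      apply UIOAux.matrix_eq_of_mulVec
      intro w
      have h := star 0 0 0 0 w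
      simp only [Matrix.mulVec_zero, add_zero, zero_add, sub_zero, zero_sub, neg_zero] at h
      rw [Matrix.zero_mulVec, ← Matrix.mulVec_mulVec]
      exact neg_eq_zero.1 h
    have E2 : E - Dy * (Cm * E) = -(Auio * (Dy * F)) + By * F := by
      apply UIOAux.matrix_eq_of_mulVec
      intro w
      have h := star 0 0 0 w 0
      simp only [Matrix.mulVec_zero, add_zero, zero_add, sub_zero, zero_sub, neg_zero,
        Matrix.mulVec_neg] at h
      simp only [Matrix.sub_mulVec, Matrix.add_mulVec, Matrix.neg_mulVec,
        ← Matrix.mulVec_mulVec]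
      exact h
    have hAuio_tend : ∀ v : Fin n → ℝ,
        Tendsto (fun t => (Auio ^ t).mulVec v) atTop (nhds 0) := by
      intro v
      have hsol : SigmaSol A B Cm Dm E F (fun _ => 0) (fun _ => 0) (fun _ => 0)
          (fun _ => 0) := by
        intro t
        constructor <;> simp [Matrix.mulVec_zero]
      have hobs : ObsSol Auio Bu By Du Dy (fun t => (Auio ^ t).mulVec v) (fun _ => 0)
          (fun _ => 0) (fun t => (Auio ^ t).mulVec v) := by
        intro t
        constructor
        · simp only [Matrix.mulVec_zero, add_zero]
          rw [Matrix.mulVec_mulVec, ← pow_succ']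
        · simp [Matrix.mulVec_zero]
      have h1 := htend _ _ _ _ _ _ hsol hobs
      have h2 := h1.neg
      simpa using h2
    have hschur : SchurStable Auio := UIOAux.schur_of_tendsto hAuio_tend
    have hL0W : Matrix.fromCols (1 - Dy * Cm) (-(By - Auio * Dy)) *
        Matrix.fromRows E F = 0 := by
      rw [Matrix.fromCols_mul_fromRows]
      calc (1 - Dy * Cm) * E + -(By - Auio * Dy) * F
          = E - Dy * (Cm * E) - (By * F - Auio * (Dy * F)) := by
            rw [Matrix.sub_mul, Matrix.one_mul, Matrix.mul_assoc, Matrix.neg_mul,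
              Matrix.sub_mul, Matrix.mul_assoc]
            abel
        _ = (-(Auio * (Dy * F)) + By * F) - (By * F - Auio * (Dy * F)) := by rw [E2]
        _ = 0 := by abel
    have hL1W : Matrix.fromCols (0 : Matrix (Fin n) (Fin n) ℝ) Dy *
        Matrix.fromRows E F = 0 := by
      rw [Matrix.fromCols_mul_fromRows, Matrix.zero_mul, zero_add, E3]
    obtain ⟨G0, hG0⟩ := UIOAux.exists_factor (Matrix.fromCols ME MF)
      (Matrix.fromRows E F) hMrank hEF hcard hMW _ hL0W
    obtain ⟨G1, hG1⟩ := UIOAux.exists_factor (Matrix.fromCols ME MF)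
      (Matrix.fromRows E F) hMrank hEF hcard hMW _ hL1W
    rw [Matrix.mul_fromCols] at hG0 hG1
    obtain ⟨hG0E, hG0F⟩ := (Matrix.fromCols_ext_iff _ _ _ _).1 hG0
    obtain ⟨hG1E, hG1F⟩ := (Matrix.fromCols_ext_iff _ _ _ _).1 hG1
    have hG1N : G1 * (ME * A + MF * Cm) = Dy * Cm := by
      rw [Matrix.mul_add, ← Matrix.mul_assoc, ← Matrix.mul_assoc, hG1E, hG1F,
        Matrix.zero_mul, zero_add]
    have hG0N : G0 * (ME * A + MF * Cm) = Auio := by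
      rw [Matrix.mul_add, ← Matrix.mul_assoc, ← Matrix.mul_assoc, hG0E, hG0F]
      have h2 : (1 - Dy * Cm) * A + -(By - Auio * Dy) * Cm =
          A - Dy * (Cm * A) - (By * Cm - Auio * (Dy * Cm)) := by
        rw [Matrix.sub_mul, Matrix.one_mul, Matrix.mul_assoc, Matrix.neg_mul,
          Matrix.sub_mul, Matrix.mul_assoc]
        abel
      rw [h2, E1]
      abel
    refine ⟨G0, -G1, Auio, hschur, ?_⟩
    rw [UIOAux.lhs_normal, UIOAux.rhs_normal]
    have hP : -G1 * ME = 0 := by rw [Matrix.neg_mul, hG1E, neg_zero]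
    have hQ : G0 * ME - -G1 * (ME * A + MF * Cm) = 1 := by
      rw [Matrix.neg_mul, hG1N, hG0E]
      abel
    rw [hP, hQ, hG0N]
  · rintro ⟨T0, T1, Auio, hschur, hpoly⟩
    rw [UIOAux.lhs_normal, UIOAux.rhs_normal] at hpoly
    obtain ⟨hP, hQ, hR⟩ := UIOAux.matrix_coeff_eq hpoly
    have key : ∀ (x : ℕ → Fin n → ℝ) (u : ℕ → Fin m → ℝ) (y : ℕ → Fin p → ℝ)
        (d : ℕ → Fin r → ℝ), SigmaSol A B Cm Dm E F x u y d → ∀ t,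
        ME.mulVec (x (t+1)) + MF.mulVec (y t) =
          (ME * A + MF * Cm).mulVec (x t) + (ME * B + MF * Dm).mulVec (u t) := by
      intro x u y d hsol t
      obtain ⟨hx, hy⟩ := hsol t
      have hz : (ME * E).mulVec (d t) + (MF * F).mulVec (d t) = 0 := by
        rw [← Matrix.add_mulVec, hEF0, Matrix.zero_mulVec]
      have hexp : ME.mulVec (x (t+1)) + MF.mulVec (y t)
          = ((ME * A + MF * Cm).mulVec (x t) + (ME * B + MF * Dm).mulVec (u t)) +
            ((ME * E).mulVec (d t) + (MF * F).mulVec (d t)) := by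
        rw [hx, hy]
        simp only [Matrix.mulVec_add, Matrix.mulVec_mulVec, Matrix.add_mulVec]
        abel
      rw [hexp, hz, add_zero]
    have idlem : ∀ (x : ℕ → Fin n → ℝ) (u : ℕ → Fin m → ℝ) (y : ℕ → Fin p → ℝ)
        (d : ℕ → Fin r → ℝ), SigmaSol A B Cm Dm E F x u y d → ∀ t,
        x t = (T0 * ME).mulVec (x t) + (T1 * (ME * B + MF * Dm)).mulVec (u t) +
          (-(T1 * MF)).mulVec (y t) := by
      intro x u y d hsol t
      have hNx : (ME * A + MF * Cm).mulVec (x t) =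
          ME.mulVec (x (t+1)) + MF.mulVec (y t) - (ME * B + MF * Dm).mulVec (u t) := by
        rw [eq_sub_iff_add_eq]
        exact (key x u y d hsol t).symm
      calc x t = ((T0 * ME - T1 * (ME * A + MF * Cm))).mulVec (x t) := by
            rw [hQ, Matrix.one_mulVec]
        _ = (T0 * ME).mulVec (x t) - T1.mulVec ((ME * A + MF * Cm).mulVec (x t)) := by
            rw [Matrix.sub_mulVec, ← Matrix.mulVec_mulVec (x t) T1 (ME * A + MF * Cm)]
        _ = (T0 * ME).mulVec (x t) -
            (T1.mulVec (ME.mulVec (x (t+1))) + T1.mulVec (MF.mulVec (y t))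
              - T1.mulVec ((ME * B + MF * Dm).mulVec (u t))) := by
            rw [hNx, Matrix.mulVec_sub, Matrix.mulVec_add]
        _ = (T0 * ME).mulVec (x t) + (T1 * (ME * B + MF * Dm)).mulVec (u t) +
            (-(T1 * MF)).mulVec (y t) := by
            rw [Matrix.mulVec_mulVec, Matrix.mulVec_mulVec, Matrix.mulVec_mulVec, hP,
              Matrix.zero_mulVec, Matrix.neg_mulVec]
            abel
    have keyT0 : ∀ (x : ℕ → Fin n → ℝ) (u : ℕ → Fin m → ℝ) (y : ℕ → Fin p → ℝ)
        (d : ℕ → Fin r → ℝ), SigmaSol A B Cm Dm E F x u y d → ∀ t,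
        (T0 * ME).mulVec (x (t+1)) =
          Auio.mulVec (x t) + (T0 * (ME * B + MF * Dm)).mulVec (u t) -
            (T0 * MF).mulVec (y t) := by
      intro x u y d hsol t
      have hMEx : ME.mulVec (x (t+1)) = (ME * A + MF * Cm).mulVec (x t) +
          (ME * B + MF * Dm).mulVec (u t) - MF.mulVec (y t) := by
        rw [eq_sub_iff_add_eq]
        exact key x u y d hsol t
      calc (T0 * ME).mulVec (x (t+1)) = T0.mulVec (ME.mulVec (x (t+1))) := by
            rw [Matrix.mulVec_mulVec]
        _ = T0.mulVec ((ME * A + MF * Cm).mulVec (x t)) +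
              T0.mulVec ((ME * B + MF * Dm).mulVec (u t))
              - T0.mulVec (MF.mulVec (y t)) := by
            rw [hMEx, Matrix.mulVec_sub, Matrix.mulVec_add]
        _ = Auio.mulVec (x t) + (T0 * (ME * B + MF * Dm)).mulVec (u t) -
              (T0 * MF).mulVec (y t) := by
            rw [Matrix.mulVec_mulVec, Matrix.mulVec_mulVec, Matrix.mulVec_mulVec, hR]
    refine ⟨Auio, Auio * (T1 * (ME * B + MF * Dm)) + T0 * (ME * B + MF * Dm),
      Auio * (-(T1 * MF)) - T0 * MF, T1 * (ME * B + MF * Dm), -(T1 * MF), ?_, ?_⟩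
    · intro x u y d hsol
      refine ⟨fun t => (T0 * ME).mulVec (x t), fun t => ⟨?_, ?_⟩⟩
      · beta_reduce
        rw [keyT0 x u y d hsol t]
        nth_rewrite 1 [idlem x u y d hsol t]
        simp only [Matrix.mulVec_add, Matrix.add_mulVec, Matrix.sub_mulVec,
          Matrix.neg_mulVec, Matrix.mulVec_neg, ← Matrix.mulVec_mulVec]
        abel
      · exact idlem x u y d hsol t
    · intro x u y d xh z hsol hobs
      have hstep : ∀ t, x (t+1) - xh (t+1) = Auio.mulVec (x t - xh t) := by
        intro t
        have h1 : x (t+1) - xh (t+1) = (T0 * ME).mulVec (x (t+1)) - z (t+1) := by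
          rw [(hobs (t+1)).2]
          nth_rewrite 1 [idlem x u y d hsol (t+1)]
          abel
        rw [h1, keyT0 x u y d hsol t, (hobs t).1]
        have h2 : x t - xh t = x t - z t - (T1 * (ME * B + MF * Dm)).mulVec (u t) -
            (-(T1 * MF)).mulVec (y t) := by
          rw [(hobs t).2]
          abel
        rw [h2]
        simp only [Matrix.mulVec_add, Matrix.mulVec_sub, Matrix.add_mulVec,
          Matrix.sub_mulVec, Matrix.neg_mulVec, Matrix.mulVec_neg, ← Matrix.mulVec_mulVec]
        abel
      have hepow : ∀ t, x t - xh t = (Auio ^ t).mulVec (x 0 - xh 0) := by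
        intro t
        induction t with
        | zero => simp [Matrix.one_mulVec]
        | succ t ih => rw [hstep t, ih, Matrix.mulVec_mulVec, ← pow_succ']
      have hten := UIOAux.tendsto_pow_mulVec_of_schur hschur (x 0 - xh 0)
      exact (tendsto_congr hepow).2 hten
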